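/- Let R be a commutative topological ring, E a topological R-module (E is a topological space, an R-module, and both addition E × E → E and scalar multiplication R × E → E are continuous), and let e ∈ R be idempotent (e² = e). If C₁, C₂ ⊆ E are open and nonempty, then the set e•C₁ + (1−e)•C₂ := {e·c₁ + (1−e)·c₂ : c₁ ∈ C₁, c₂ ∈ C₂} is open in E. -/

import Mathlib

/-- **Openness of idempotent concatenations in a topological module.**
Let `R` be a commutative topological ring, `E` a topological `R`-module
(addition and scalar multiplication are continuous), and `e ∈ R` idempotent.
If `C₁, C₂ ⊆ E` are open and nonempty, then
`e • C₁ + (1 − e) • C₂ = {e • c₁ + (1 − e) • c₂ ∣ c₁ ∈ C₁, c₂ ∈ C₂}` is open. -/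
theorem stmt13 {R : Type*} [CommRing R] [TopologicalSpace R] [IsTopologicalRing R]
    {E : Type*} [AddCommGroup E] [Module R E] [TopologicalSpace E]
    [ContinuousAdd E] [ContinuousSMul R E]
    (e : R) (he : e * e = e)
    (C₁ C₂ : Set E) (h₁ : IsOpen C₁) (h₂ : IsOpen C₂)
    (hne₁ : C₁.Nonempty) (hne₂ : C₂.Nonempty) :
    IsOpen {z : E | ∃ c₁ ∈ C₁, ∃ c₂ ∈ C₂, z = e • c₁ + (1 - e) • c₂} := by
  rw [isOpen_iff_forall_mem_open]
  rintro z ⟨c₁, hc₁, c₂, hc₂, rfl⟩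
  set z := e • c₁ + (1 - e) • c₂ with hz
  refine ⟨{x | x + (c₁ - z) ∈ C₁ ∧ x + (c₂ - z) ∈ C₂}, ?_, ?_, ?_⟩
  · rintro x ⟨hx₁, hx₂⟩
    refine ⟨x + (c₁ - z), hx₁, x + (c₂ - z), hx₂, ?_⟩
    have h1 : e • (x - z) + (1 - e) • (x - z) = x - z := by
      rw [← add_smul]; simp
    have e1 : x + (c₁ - z) = (x - z) + c₁ := by abel
    have e2 : x + (c₂ - z) = (x - z) + c₂ := by abel
    rw [e1, e2, smul_add, smul_add,
      show e • (x - z) + e • c₁ + ((1 - e) • (x - z) + (1 - e) • c₂)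
        = (e • (x - z) + (1 - e) • (x - z)) + (e • c₁ + (1 - e) • c₂) by abel,
      h1, ← hz]
    abel
  · exact IsOpen.inter
      (h₁.preimage (continuous_id.add continuous_const))
      (h₂.preimage (continuous_id.add continuous_const))
  · show z + (c₁ - z) ∈ C₁ ∧ z + (c₂ - z) ∈ C₂
    constructor
    · rw [show z + (c₁ - z) = c₁ by abel]; exact hc₁
    · rw [show z + (c₂ - z) = c₂ by abel]; exact hc₂
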